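/- Under Assumptions A1 and A2: (i) for every x ∈ S₊, the acceptance part a(x,·) of the Metropolis–Hastings kernel is absolutely continuous with respect to Lebesgue measure with density a(x,y) = min{1, π(y)J(x|y)/(π(x)J(y|x))} J(y|x), and (x,y) ↦ a(x,y) is continuous and bounded on S₊ × S; (ii) the rejection probability r(x) = 1 − a(x,S) is continuous on all of S, with r(x) = 0 for x ∉ S₊; in particular, if x_n → x with π(x) = 0, then a(x_n, S) → 1 and r(x_n) → 0. -/

import Mathlib

open MeasureTheory ProbabilityTheory Filter Set Metric
open scoped ENNReal NNReal Topology

noncomputable section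

namespace MHLDP

variable {α : Type*}

open Classical in
/-- Relative entropy `R(μ‖ν) = ∫ log (dμ/dν) dμ` if `μ ≪ ν` (and the integral exists),
`+∞` otherwise. -/
def relEnt [MeasurableSpace α] (μ ν : Measure α) : ℝ≥0∞ :=
  if μ ≪ ν ∧ Integrable (fun x => Real.log ((μ.rnDeriv ν x).toReal)) μ
  then ENNReal.ofReal (∫ x, Real.log ((μ.rnDeriv ν x).toReal) ∂μ)
  else ⊤

variable {d : ℕ} {S : Set (EuclideanSpace ℝ (Fin d))}

/-- Lebesgue measure on (the subtype) `S ⊆ ℝ^d`. -/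
def leb (S : Set (EuclideanSpace ℝ (Fin d))) : Measure S :=
  Measure.comap Subtype.val volume

/-- The Hastings ratio `min{1, π(y)J(x|y)/(π(x)J(y|x))}`, set to `1` when
`π(x)J(y|x) = 0`.  Here `Jd x y` denotes the density `J(y|x)`. -/
def hastingsRatio (πd : S → ℝ) (Jd : S → S → ℝ) (x y : S) : ℝ :=
  if πd x * Jd x y = 0 then 1 else min 1 ((πd y * Jd y x) / (πd x * Jd x y))

/-- The Lebesgue density `a(x,y)` of the acceptance part of the MH kernel. -/
def accDens (πd : S → ℝ) (Jd : S → S → ℝ) (x y : S) : ℝ :=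
  hastingsRatio πd Jd x y * Jd x y

/-- The acceptance sub-probability kernel `a(x,dy)`. -/
def acc (πd : S → ℝ) (Jd : S → S → ℝ) (x : S) : Measure S :=
  (leb S).withDensity (fun y => ENNReal.ofReal (accDens πd Jd x y))

/-- The rejection probability `r(x) = 1 - a(x,S)`. -/
def rej (πd : S → ℝ) (Jd : S → S → ℝ) (x : S) : ℝ :=
  1 - (acc πd Jd x Set.univ).toReal

/-- The Metropolis–Hastings transition kernel `K(x,dy) = a(x,dy) + r(x) δ_x(dy)`. -/
def mhK (πd : S → ℝ) (Jd : S → S → ℝ) (x : S) : Measure S :=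
  acc πd Jd x + ENNReal.ofReal (rej πd Jd x) • Measure.dirac x

/-- `μ` is an invariant measure for the transition kernel `q`. -/
def Invariant [MeasurableSpace α] (μ : Measure α) (q : α → Measure α) : Prop :=
  ∀ A : Set α, MeasurableSet A → μ A = ∫⁻ x, q x A ∂μ

/-- The rate function `I(ν) = inf_q ∫ R(q(x,·) ‖ K(x,·)) ν(dx)`, infimum over Markov
transition kernels `q` with invariant measure `ν`. -/
def rateI [MeasurableSpace α] (K : α → Measure α) (ν : Measure α) : ℝ≥0∞ :=
  ⨅ (q : Kernel α α) (_ : IsMarkovKernel q) (_ : Invariant ν (fun x => q x)),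
    ∫⁻ x, relEnt (q x) (K x) ∂ν

/-- The joint measure `(μ ⊗ K)(dx dy) = μ(dx) K(x,dy)` on `S × S`. -/
def prodK [MeasurableSpace α] (μ : Measure α) (K : α → Measure α) : Measure (α × α) :=
  μ.bind fun x => (K x).map fun y => (x, y)

/-- The rate function `I(μ) = inf_{γ ∈ A(μ)} R(γ ‖ μ ⊗ K)`, infimum over probability
measures on `S × S` with both marginals equal to `μ`. -/
def rateEmp [MeasurableSpace α] (K : α → Measure α) (μ : Measure α) : ℝ≥0∞ :=
  ⨅ (γ : Measure (α × α)) (_ : IsProbabilityMeasure γ)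
    (_ : γ.map Prod.fst = μ) (_ : γ.map Prod.snd = μ), relEnt γ (prodK μ K)

/-- Assumptions (A.1) and (A.2): `π` is a probability measure on `S` with continuous
density `πd` w.r.t. Lebesgue measure, equivalent to Lebesgue measure; the proposal
distributions `J(·|x)` are probability measures with jointly continuous, bounded,
strictly positive density `Jd x · = J(·|x)`, absolutely continuous w.r.t. `π`. -/
structure Assumptions (πd : S → ℝ) (Jd : S → S → ℝ) (π : Measure S) : Prop where
  measS : MeasurableSet S
  prob_pi : IsProbabilityMeasure π
  pi_nonneg : ∀ x, 0 ≤ πd x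
  pi_dens : π = (leb S).withDensity (fun x => ENNReal.ofReal (πd x))
  pi_cont : Continuous πd
  pi_ac : π ≪ leb S
  leb_ac : leb S ≪ π
  J_nonneg : ∀ x y, 0 ≤ Jd x y
  J_dens_prob : ∀ x, IsProbabilityMeasure ((leb S).withDensity (fun y => ENNReal.ofReal (Jd x y)))
  J_ac_pi : ∀ x, (leb S).withDensity (fun y => ENNReal.ofReal (Jd x y)) ≪ π
  J_cont : Continuous (fun p : S × S => Jd p.1 p.2)
  J_bdd : ∃ C : ℝ, ∀ x y, Jd x y ≤ C
  J_pos : ∀ x y, 0 < Jd x y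

/-- Assumption (A.3): existence of a Lyapunov function `U` for the kernel `K`. -/
structure Lyapunov (K : S → Measure S) (U : S → ℝ) : Prop where
  nonneg : ∀ x, 0 ≤ U x
  lb : ∃ M : ℝ, ∀ x, (M : EReal) ≤ (U x : EReal)
        - ENNReal.log (∫⁻ y, ENNReal.ofReal (Real.exp (U y)) ∂(K x))
  cpt : ∀ M : ℝ, IsCompact (closure {x : S | (U x : EReal)
        - ENNReal.log (∫⁻ y, ENNReal.ofReal (Real.exp (U y)) ∂(K x)) ≤ (M : EReal)})
  bdd_on_cpt : ∀ C : Set S, IsCompact C → ∃ B : ℝ, ∀ x ∈ C, U x ≤ B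

/-- The law of `(X_0, …, X_n)` for the Markov chain with transition kernel `K`
started at `x`. -/
def chainLaw [MeasurableSpace α] (K : α → Measure α) (x : α) : (n : ℕ) → Measure (Fin (n + 1) → α)
  | 0 => Measure.dirac (fun _ => x)
  | (n + 1) => (chainLaw K x n).bind (fun p => (K (p (Fin.last n))).map (fun y => Fin.snoc p y))

/-- The empirical measure of a finite path. -/
def empMeas [MeasurableSpace α] {n : ℕ} (p : Fin (n + 1) → α) : Measure α :=
  ((n : ℝ≥0∞) + 1)⁻¹ • ∑ i : Fin (n + 1), Measure.dirac (p i)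

lemma empMeas_isProbabilityMeasure [MeasurableSpace α] {n : ℕ} (p : Fin (n + 1) → α) :
    IsProbabilityMeasure (empMeas p) := by
  constructor
  simp only [empMeas, Measure.smul_apply, Measure.finset_sum_apply, measure_univ, smul_eq_mul]
  rw [Finset.sum_const, Finset.card_univ, Fintype.card_fin, nsmul_eq_mul, mul_one]
  rw [show ((n + 1 : ℕ) : ℝ≥0∞) = (n : ℝ≥0∞) + 1 by push_cast; ring]
  exact ENNReal.inv_mul_cancel (by simp) (by finiteness)

/-- The empirical measure of a finite path, as a probability measure. -/
def empProb [MeasurableSpace α] {n : ℕ} (p : Fin (n + 1) → α) : ProbabilityMeasure α :=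
  ⟨empMeas p, empMeas_isProbabilityMeasure p⟩

end MHLDP

namespace MHLDP

variable {α : Type*} {d : ℕ} {S : Set (EuclideanSpace ℝ (Fin d))}

/-- The `k`-step transition probabilities of the kernel `K`. -/
def kIter [MeasurableSpace α] (K : α → Measure α) : ℕ → α → Measure α
  | 0, x => Measure.dirac x
  | (n + 1), x => (kIter K n x).bind K

/-- Ergodicity of the stationary Markov chain with initial (invariant) distribution `μ` and
transition kernel `q`: every a.s. invariant set is trivial. -/
def KernelErgodic [MeasurableSpace α] (μ : Measure α) (q : α → Measure α) : Prop :=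
  Invariant μ q ∧ ∀ A : Set α, MeasurableSet A →
    (∀ᵐ x ∂μ, x ∈ A → q x A = 1) → μ A = 0 ∨ μ A = 1

/-- The set `S₊ = {x ∈ S : π(x) > 0}`. -/
def Splus (πd : S → ℝ) : Set S := {x | 0 < πd x}

/-- The modulus `Δ_ε(x)` of the ball-smoothing construction. -/
def Delta (πd : S → ℝ) (Jd : S → S → ℝ) (ε : ℝ) (x : S) : ℝ :=
  sSup {t : ℝ | ∀ y z : S, dist y x < t → dist z x < t →
    |Real.log (accDens πd Jd x x) - Real.log (accDens πd Jd y z)| < ε ∧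
    |Real.log (rej πd Jd x) - Real.log (rej πd Jd y)| < ε}

/-- The random radius `ϱ^n` of the ball-smoothing construction, given the sample points `Y`. -/
def rad (πd : S → ℝ) (Jd : S → S → ℝ) (n : ℕ) (Y : ℕ → S) : ℝ :=
  sInf ({1 / (n : ℝ)}
    ∪ (Set.range fun i : Fin n => Delta πd Jd (1 / (n : ℝ)) (Y (i : ℕ)))
    ∪ {t : ℝ | ∃ i j : Fin n, Y (i : ℕ) ≠ Y (j : ℕ) ∧ t = dist (Y (i : ℕ)) (Y (j : ℕ)) / 2}
    ∪ (Set.range fun i : Fin n =>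
        Metric.infDist ((Y (i : ℕ) : EuclideanSpace ℝ (Fin d))) (frontier S) / 2)
    ∪ (Set.range fun i : Fin n => accDens πd Jd (Y (i : ℕ)) (Y (i : ℕ))))

/-- The volume `V_n = λ(B_{ϱ^n}(0))`. -/
def Vn (πd : S → ℝ) (Jd : S → S → ℝ) (n : ℕ) (Y : ℕ → S) : ℝ≥0∞ :=
  volume (Metric.ball (0 : EuclideanSpace ℝ (Fin d)) (rad πd Jd n Y))

/-- The smoothed random measure `ν_s^n(dx) = (1/(n V_n)) Σ_{i<n} 1{x ∈ B_{ϱ^n}(Y_i)} λ(dx)`. -/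
def smooth (πd : S → ℝ) (Jd : S → S → ℝ) (n : ℕ) (Y : ℕ → S) : Measure S :=
  ((n : ℝ≥0∞) * Vn πd Jd n Y)⁻¹ •
    (leb S).withDensity (fun x =>
      ∑ i : Fin n, if dist x (Y (i : ℕ)) < rad πd Jd n Y then (1 : ℝ≥0∞) else 0)

end MHLDP

namespace MHLDP


open Filter in
/-- Generalized dominated convergence for lintegrals, with varying dominating
functions all of integral one. -/
lemma genDCT {β : Type*} [MeasurableSpace β] {μ : Measure β}
    {f : ℕ → β → ℝ≥0∞} {F : β → ℝ≥0∞} {g : ℕ → β → ℝ≥0∞} {G : β → ℝ≥0∞}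
    (hfm : ∀ n, Measurable (f n)) (hFm : Measurable F) (hgm : ∀ n, Measurable (g n))
    (hle : ∀ n y, f n y ≤ g n y) (hFG : ∀ y, F y ≤ G y)
    (hGfin : ∀ y, G y ≠ ∞)
    (hfF : ∀ᵐ y ∂μ, Tendsto (fun n => f n y) atTop (𝓝 (F y)))
    (hgG : ∀ᵐ y ∂μ, Tendsto (fun n => g n y) atTop (𝓝 (G y)))
    (hgint : ∀ n, ∫⁻ y, g n y ∂μ = 1) (hGint : ∫⁻ y, G y ∂μ = 1) :
    Tendsto (fun n => ∫⁻ y, f n y ∂μ) atTop (𝓝 (∫⁻ y, F y ∂μ)) := by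
  have hA1 : ∫⁻ y, F y ∂μ ≤ 1 := hGint ▸ lintegral_mono hFG
  have hAn1 : ∀ n, ∫⁻ y, f n y ∂μ ≤ 1 := fun n => (hgint n) ▸ lintegral_mono (hle n)
  have hliminf : ∫⁻ y, F y ∂μ ≤ liminf (fun n => ∫⁻ y, f n y ∂μ) atTop := by
    calc ∫⁻ y, F y ∂μ = ∫⁻ y, liminf (fun n => f n y) atTop ∂μ := by
          refine lintegral_congr_ae (hfF.mono fun y hy => ?_)
          exact (hy.liminf_eq).symm
      _ ≤ liminf (fun n => ∫⁻ y, f n y ∂μ) atTop := lintegral_liminf_le hfm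
  have hsub : ∀ n, ∫⁻ y, g n y - f n y ∂μ = 1 - ∫⁻ y, f n y ∂μ := by
    intro n
    rw [lintegral_sub (hfm n) (lt_of_le_of_lt (hAn1 n) ENNReal.one_lt_top).ne
      (Eventually.of_forall (hle n)), hgint n]
  have hsubF : ∫⁻ y, G y - F y ∂μ = 1 - ∫⁻ y, F y ∂μ := by
    rw [lintegral_sub hFm (lt_of_le_of_lt hA1 ENNReal.one_lt_top).ne
      (Eventually.of_forall hFG), hGint]
  have hlimsup : limsup (fun n => ∫⁻ y, f n y ∂μ) atTop ≤ ∫⁻ y, F y ∂μ := by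
    have key : 1 - ∫⁻ y, F y ∂μ ≤ liminf (fun n => 1 - ∫⁻ y, f n y ∂μ) atTop := by
      rw [← hsubF]
      calc ∫⁻ y, G y - F y ∂μ = ∫⁻ y, liminf (fun n => g n y - f n y) atTop ∂μ := by
            refine lintegral_congr_ae ((hfF.and hgG).mono fun y ⟨hy1, hy2⟩ => ?_)
            exact ((ENNReal.Tendsto.sub hy2 hy1 (Or.inl (hGfin y))).liminf_eq).symm
        _ ≤ liminf (fun n => ∫⁻ y, g n y - f n y ∂μ) atTop :=
            lintegral_liminf_le' (fun n => ((hgm n).sub (hfm n)).aemeasurable)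
        _ = liminf (fun n => 1 - ∫⁻ y, f n y ∂μ) atTop := by
            congr 1; funext n; exact hsub n
    rw [ENNReal.liminf_const_sub atTop _ ENNReal.one_ne_top] at key
    exact (ENNReal.sub_le_sub_iff_left (limsup_le_of_le (by isBoundedDefault)
      (Eventually.of_forall (fun n => hAn1 n))) ENNReal.one_ne_top).mp key
  exact tendsto_of_le_liminf_of_limsup_le hliminf hlimsup

section Helpers

open Filter

variable {d : ℕ} {S : Set (EuclideanSpace ℝ (Fin d))}
variable {πd : S → ℝ} {Jd : S → S → ℝ} {π : Measure S}

lemma accDens_le (hA : Assumptions πd Jd π) (x y : S) : accDens πd Jd x y ≤ Jd x y := by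
  unfold accDens hastingsRatio
  split_ifs with h
  · rw [one_mul]
  · have hden : 0 < πd x * Jd x y :=
      lt_of_le_of_ne (mul_nonneg (hA.pi_nonneg x) (hA.J_nonneg x y)) (Ne.symm h)
    calc min 1 ((πd y * Jd y x) / (πd x * Jd x y)) * Jd x y
        ≤ 1 * Jd x y := by
          apply mul_le_mul_of_nonneg_right (min_le_left _ _) (hA.J_nonneg x y)
      _ = Jd x y := one_mul _

lemma accDens_nonneg (hA : Assumptions πd Jd π) (x y : S) : 0 ≤ accDens πd Jd x y := by
  unfold accDens hastingsRatio
  split_ifs with h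
  · rw [one_mul]; exact hA.J_nonneg x y
  · have hden : 0 < πd x * Jd x y :=
      lt_of_le_of_ne (mul_nonneg (hA.pi_nonneg x) (hA.J_nonneg x y)) (Ne.symm h)
    exact mul_nonneg (le_min zero_le_one
      (div_nonneg (mul_nonneg (hA.pi_nonneg y) (hA.J_nonneg y x)) hden.le)) (hA.J_nonneg x y)

lemma cont_Jd_left (hA : Assumptions πd Jd π) (y : S) : Continuous fun z : S => Jd z y :=
  hA.J_cont.comp (continuous_id.prodMk continuous_const)

lemma cont_Jd_right (hA : Assumptions πd Jd π) (x : S) : Continuous fun y : S => Jd x y :=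
  hA.J_cont.comp (continuous_const.prodMk continuous_id)

lemma accDens_eq_of_pi_zero (hA : Assumptions πd Jd π) {x : S} (hx : πd x = 0) (y : S) :
    accDens πd Jd x y = Jd x y := by
  unfold accDens hastingsRatio
  rw [if_pos (by rw [hx, zero_mul]), one_mul]

lemma accDens_cont_right (hA : Assumptions πd Jd π) (x : S) :
    Continuous fun y : S => accDens πd Jd x y := by
  by_cases hx : πd x = 0
  · exact (cont_Jd_right hA x).congr fun y => (accDens_eq_of_pi_zero hA hx y).symm
  · have hx' : 0 < πd x := lt_of_le_of_ne (hA.pi_nonneg x) (Ne.symm hx)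
    have heq : ∀ y, accDens πd Jd x y
        = min 1 ((πd y * Jd y x) / (πd x * Jd x y)) * Jd x y := by
      intro y; unfold accDens hastingsRatio
      rw [if_neg (mul_pos hx' (hA.J_pos x y)).ne']
    refine Continuous.congr ?_ fun y => (heq y).symm
    exact (continuous_const.min ((hA.pi_cont.mul (cont_Jd_left hA x)).div
      (continuous_const.mul (cont_Jd_right hA x))
      (fun y => (mul_pos hx' (hA.J_pos x y)).ne'))).mul (cont_Jd_right hA x)

lemma lintegral_Jd (hA : Assumptions πd Jd π) (x : S) :
    ∫⁻ y, ENNReal.ofReal (Jd x y) ∂(leb S) = 1 := by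
  have h := (hA.J_dens_prob x).measure_univ
  rwa [withDensity_apply _ MeasurableSet.univ, setLIntegral_univ] at h

lemma acc_univ_eq (x : S) :
    acc πd Jd x Set.univ = ∫⁻ y, ENNReal.ofReal (accDens πd Jd x y) ∂(leb S) := by
  rw [acc, withDensity_apply _ MeasurableSet.univ, setLIntegral_univ]

lemma acc_univ_le_one (hA : Assumptions πd Jd π) (x : S) : acc πd Jd x Set.univ ≤ 1 := by
  rw [acc_univ_eq, ← lintegral_Jd hA x]
  exact lintegral_mono fun y => ENNReal.ofReal_le_ofReal (accDens_le hA x y)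

lemma leb_null_pi_zero (hA : Assumptions πd Jd π) : leb S {y : S | πd y = 0} = 0 := by
  apply hA.leb_ac
  have hms : MeasurableSet {y : S | πd y = 0} :=
    hA.pi_cont.measurable (measurableSet_singleton 0)
  rw [hA.pi_dens, withDensity_apply _ hms]
  rw [setLIntegral_congr_fun (g := fun _ => (0 : ℝ≥0∞)) hms
    (fun y (hy : πd y = 0) => by simp [hy])]
  simp

lemma accDens_tendsto (hA : Assumptions πd Jd π) {x : S} {u : ℕ → S}
    (hu : Tendsto u atTop (𝓝 x)) {y : S} (hy : 0 < πd y) :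
    Tendsto (fun n => accDens πd Jd (u n) y) atTop (𝓝 (accDens πd Jd x y)) := by
  have c1 : Tendsto (fun n => πd (u n)) atTop (𝓝 (πd x)) := (hA.pi_cont.tendsto x).comp hu
  have c2 : Tendsto (fun n => Jd (u n) y) atTop (𝓝 (Jd x y)) :=
    ((cont_Jd_left hA y).tendsto x).comp hu
  have c3 : Tendsto (fun n => Jd y (u n)) atTop (𝓝 (Jd y x)) :=
    ((cont_Jd_right hA y).tendsto x).comp hu
  by_cases hx : 0 < πd x
  · have hev : ∀ᶠ n in atTop, (fun n => min 1 ((πd y * Jd y (u n)) /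
        (πd (u n) * Jd (u n) y)) * Jd (u n) y) n = accDens πd Jd (u n) y := by
      filter_upwards [c1.eventually (eventually_gt_nhds hx)] with n hn
      unfold accDens hastingsRatio
      rw [if_neg (mul_pos hn (hA.J_pos _ y)).ne']
    have htarget : accDens πd Jd x y = min 1 ((πd y * Jd y x) / (πd x * Jd x y)) * Jd x y := by
      unfold accDens hastingsRatio; rw [if_neg (mul_pos hx (hA.J_pos x y)).ne']
    rw [htarget]
    refine Tendsto.congr' hev ?_
    exact (tendsto_const_nhds.min ((tendsto_const_nhds.mul c3).div (c1.mul c2)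
      (mul_pos hx (hA.J_pos x y)).ne')).mul c2
  · have hx0 : πd x = 0 := le_antisymm (not_lt.1 hx) (hA.pi_nonneg x)
    have hlt : ∀ᶠ n in atTop, πd (u n) * Jd (u n) y < πd y * Jd y (u n) := by
      have h1 : Tendsto (fun n => πd (u n) * Jd (u n) y) atTop (𝓝 0) := by
        have h := c1.mul c2; rwa [hx0, zero_mul] at h
      exact h1.eventually_lt (tendsto_const_nhds.mul c3) (mul_pos hy (hA.J_pos y x))
    have hev : ∀ᶠ n in atTop, (fun n => Jd (u n) y) n = accDens πd Jd (u n) y := by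
      filter_upwards [hlt] with n hn
      unfold accDens hastingsRatio
      by_cases hz : πd (u n) * Jd (u n) y = 0
      · rw [if_pos hz, one_mul]
      · have hd : 0 < πd (u n) * Jd (u n) y :=
          lt_of_le_of_ne (mul_nonneg (hA.pi_nonneg _) (hA.J_nonneg _ _)) (Ne.symm hz)
        rw [if_neg hz, min_eq_left ((one_lt_div hd).mpr hn).le, one_mul]
    rw [accDens_eq_of_pi_zero hA hx0]
    exact Tendsto.congr' hev c2

lemma acc_tendsto (hA : Assumptions πd Jd π) {x : S} {u : ℕ → S}
    (hu : Tendsto u atTop (𝓝 x)) :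
    Tendsto (fun n => acc πd Jd (u n) Set.univ) atTop (𝓝 (acc πd Jd x Set.univ)) := by
  simp only [acc_univ_eq]
  refine genDCT (g := fun n y => ENNReal.ofReal (Jd (u n) y))
    (G := fun y => ENNReal.ofReal (Jd x y))
    (fun n => (accDens_cont_right hA (u n)).measurable.ennreal_ofReal)
    ((accDens_cont_right hA x).measurable.ennreal_ofReal)
    (fun n => (cont_Jd_right hA (u n)).measurable.ennreal_ofReal)
    (fun n y => ENNReal.ofReal_le_ofReal (accDens_le hA _ y))
    (fun y => ENNReal.ofReal_le_ofReal (accDens_le hA _ y))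
    (fun y => ENNReal.ofReal_ne_top) ?_ ?_ (fun n => lintegral_Jd hA (u n)) (lintegral_Jd hA x)
  · rw [MeasureTheory.ae_iff]
    refine measure_mono_null (fun y hy => ?_) (leb_null_pi_zero hA)
    by_contra hy0
    have hy' : 0 < πd y :=
      lt_of_le_of_ne (hA.pi_nonneg y) (Ne.symm (by simpa using hy0))
    exact hy (ENNReal.tendsto_ofReal (accDens_tendsto hA hu hy'))
  · refine Filter.Eventually.of_forall (fun y => ?_)
    exact ENNReal.tendsto_ofReal (((cont_Jd_left hA y).tendsto x).comp hu)

lemma rej_continuous (hA : Assumptions πd Jd π) : Continuous (rej πd Jd) := by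
  have h1 : Continuous fun x : S => (acc πd Jd x Set.univ).toReal := by
    apply SeqContinuous.continuous
    intro u x hu
    exact (ENNReal.tendsto_toReal
      (lt_of_le_of_lt (acc_univ_le_one hA x) ENNReal.one_lt_top).ne).comp (acc_tendsto hA hu)
  exact continuous_const.sub h1

lemma rej_zero (hA : Assumptions πd Jd π) {x : S} (hx : x ∉ Splus πd) : rej πd Jd x = 0 := by
  simp only [Splus, Set.mem_setOf_eq] at hx
  have hx0 : πd x = 0 := le_antisymm (not_lt.1 hx) (hA.pi_nonneg x)
  have hacc : acc πd Jd x = (leb S).withDensity (fun y => ENNReal.ofReal (Jd x y)) := by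
    unfold acc; congr 1; funext y; rw [accDens_eq_of_pi_zero hA hx0]
  rw [rej, hacc, (hA.J_dens_prob x).measure_univ, ENNReal.toReal_one, sub_self]

end Helpers

/-- **Remark 3.1 (regularity of the acceptance and rejection parts).** Under
Assumptions (A.1)–(A.2): (i) for `x ∈ S₊`, `a(x,·) ≪ λ` with density
`a(x,y) = min{1, π(y)J(x|y)/(π(x)J(y|x))} J(y|x)`, continuous and bounded on `S₊ × S`;
(ii) `r` is continuous on all of `S` and vanishes off `S₊`; in particular if `x_n → x`
with `π(x) = 0` then `a(x_n, S) → 1` and `r(x_n) → 0`. -/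
theorem mh_acc_rej_regularity
    {d : ℕ} {S : Set (EuclideanSpace ℝ (Fin d))}
    (πd : S → ℝ) (Jd : S → S → ℝ) (π : Measure S) (hA : Assumptions πd Jd π) :
    (∀ x : S, x ∈ Splus πd → acc πd Jd x ≪ leb S) ∧
    (∀ x : S, x ∈ Splus πd →
      acc πd Jd x = (leb S).withDensity (fun y => ENNReal.ofReal (accDens πd Jd x y))) ∧
    ContinuousOn (fun p : S × S => accDens πd Jd p.1 p.2) (Splus πd ×ˢ Set.univ) ∧
    (∃ C : ℝ, ∀ x y : S, x ∈ Splus πd → accDens πd Jd x y ≤ C) ∧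
    Continuous (rej πd Jd) ∧
    (∀ x : S, x ∉ Splus πd → rej πd Jd x = 0) ∧
    (∀ (xseq : ℕ → S) (x : S), Filter.Tendsto xseq Filter.atTop (nhds x) → πd x = 0 →
      Filter.Tendsto (fun n => (acc πd Jd (xseq n) Set.univ).toReal) Filter.atTop (nhds 1) ∧
      Filter.Tendsto (fun n => rej πd Jd (xseq n)) Filter.atTop (nhds 0)) := by
  obtain ⟨C, hC⟩ := hA.J_bdd
  have hcontOn : ContinuousOn (fun p : S × S => accDens πd Jd p.1 p.2) (Splus πd ×ˢ Set.univ) := by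
    have hg : ContinuousOn (fun p : S × S =>
        min 1 ((πd p.2 * Jd p.2 p.1) / (πd p.1 * Jd p.1 p.2)) * Jd p.1 p.2)
        (Splus πd ×ˢ Set.univ) := by
      apply ContinuousOn.mul ?_ hA.J_cont.continuousOn
      refine Continuous.comp_continuousOn (g := fun t : ℝ => min 1 t)
        (continuous_const.min continuous_id) ?_
      refine ContinuousOn.div
        ((hA.pi_cont.comp continuous_snd).mul
          (hA.J_cont.comp (continuous_snd.prodMk continuous_fst))).continuousOn
        ((hA.pi_cont.comp continuous_fst).mul hA.J_cont).continuousOn ?_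
      rintro ⟨a, b⟩ ⟨ha, -⟩
      exact (mul_pos ha (hA.J_pos a b)).ne'
    refine hg.congr ?_
    rintro ⟨a, b⟩ ⟨ha, -⟩
    simp only [accDens, hastingsRatio]
    rw [if_neg (mul_pos ha (hA.J_pos a b)).ne']
  refine ⟨fun x _ => withDensity_absolutelyContinuous _ _, fun x _ => rfl, hcontOn,
    ⟨C, fun x y _ => (accDens_le hA x y).trans (hC x y)⟩, rej_continuous hA,
    fun x hx => rej_zero hA hx, ?_⟩
  intro xseq x hx hpix
  have hxS : x ∉ Splus πd := by
    simp only [Splus, Set.mem_setOf_eq, hpix]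
    exact lt_irrefl 0
  have h2 : Tendsto (fun n => rej πd Jd (xseq n)) atTop (𝓝 0) := by
    have h := ((rej_continuous hA).tendsto x).comp hx
    rwa [rej_zero hA hxS] at h
  refine ⟨?_, h2⟩
  have heq : ∀ z : S, (acc πd Jd z Set.univ).toReal = 1 - rej πd Jd z := by
    intro z; rw [rej]; ring
  simp only [heq]
  have h3 := h2.const_sub 1
  rwa [sub_zero] at h3


end MHLDP
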